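/- Let A and B be finite sets. Then the number of subsets X ⊆ A × B such that both coordinate projections X → A and X → B are surjective equals ∑_{i=0}^{|A|} (-1)^i · C(|A|, i) · (2^{|A|-i} − 1)^{|B|}, where C(n,k) denotes the binomial coefficient. -/
import Mathlib

open Finset

/-- the number of subsets `X ⊆ A × B` with both coordinate
projections surjective equals
`∑_{i=0}^{|A|} (-1)^i · C(|A|,i) · (2^{|A|-i} − 1)^{|B|}`. -/
theorem stmt13 {A B : Type} [Fintype A] [Fintype B] :
    (Nat.card {X : Set (A × B) //
        (∀ a : A, ∃ b : B, (a, b) ∈ X) ∧ (∀ b : B, ∃ a : A, (a, b) ∈ X)} : ℤ) =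
      ∑ i ∈ Finset.range (Fintype.card A + 1),
        (-1 : ℤ) ^ i * ((Fintype.card A).choose i : ℤ) *
          ((2 : ℤ) ^ (Fintype.card A - i) - 1) ^ (Fintype.card B) := by
  classical
  set m := Fintype.card A with hm
  set n := Fintype.card B with hn
  -- translate subsets of A × B into functions B → Finset A
  have e : {X : Set (A × B) //
        (∀ a : A, ∃ b : B, (a, b) ∈ X) ∧ (∀ b : B, ∃ a : A, (a, b) ∈ X)} ≃
      {f : B → Finset A // (∀ b, (f b).Nonempty) ∧ ∀ a, ∃ b, a ∈ f b} :=
    { toFun := fun X => ⟨fun b => {a | (a, b) ∈ X.1}.toFinset, by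
        obtain ⟨X, hA, hB⟩ := X
        constructor
        · intro b
          obtain ⟨a, ha⟩ := hB b
          exact ⟨a, by simp [ha]⟩
        · intro a
          obtain ⟨b, hb⟩ := hA a
          exact ⟨b, by simp [hb]⟩⟩
      invFun := fun f => ⟨{p | p.1 ∈ f.1 p.2}, by
        obtain ⟨f, h1, h2⟩ := f
        constructor
        · intro a
          obtain ⟨b, hb⟩ := h2 a
          exact ⟨b, hb⟩
        · intro b
          obtain ⟨a, ha⟩ := h1 b
          exact ⟨a, ha⟩⟩
      left_inv := fun X => by
        ext ⟨a, b⟩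
        simp
      right_inv := fun f => by
        ext b a
        simp }
  rw [Nat.card_congr e, Nat.card_eq_fintype_card, Fintype.card_subtype]
  -- inclusion-exclusion
  set cov : (B → Finset A) → Finset A := fun f => univ.filter (fun a => ∃ b, a ∈ f b)
    with hcov
  have step1 :
      (univ.filter fun f : B → Finset A =>
          (∀ b, (f b).Nonempty) ∧ ∀ a, ∃ b, a ∈ f b) =
        (univ.filter fun f : B → Finset A => ∀ b, (f b).Nonempty).filter
          (fun f => ∀ a, ∃ b, a ∈ f b) := by
    rw [Finset.filter_filter]
  rw [step1]
  rw [Finset.card_filter]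
  push_cast
  have step2 : ∀ f : B → Finset A,
      ((if ∀ a, ∃ b, a ∈ f b then (1 : ℤ) else 0)) =
        ∑ S ∈ ((cov f)ᶜ).powerset, (-1 : ℤ) ^ S.card := by
    intro f
    rw [Finset.sum_powerset_neg_one_pow_card]
    congr 1
    rw [eq_iff_iff]
    constructor
    · intro h
      ext a
      simp [hcov, h a]
    · intro h a
      by_contra hc
      push_neg at hc
      have : a ∈ (cov f)ᶜ := by simp [hcov, hc]
      rw [h] at this
      simp at this
  calc (∑ f ∈ univ.filter fun f : B → Finset A => ∀ b, (f b).Nonempty,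
        (if ∀ a, ∃ b, a ∈ f b then (1 : ℤ) else 0))
      = ∑ f ∈ univ.filter fun f : B → Finset A => ∀ b, (f b).Nonempty,
        ∑ S ∈ (univ : Finset A).powerset,
          (if S ⊆ (cov f)ᶜ then (-1 : ℤ) ^ S.card else 0) := by
        refine Finset.sum_congr rfl fun f _ => ?_
        rw [step2 f, ← Finset.sum_filter]
        congr 1
        ext S
        simp [Finset.mem_powerset]
    _ = ∑ S ∈ (univ : Finset A).powerset,
        ∑ f ∈ univ.filter fun f : B → Finset A => ∀ b, (f b).Nonempty,
          (if S ⊆ (cov f)ᶜ then (-1 : ℤ) ^ S.card else 0) := Finset.sum_comm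
    _ = ∑ S ∈ (univ : Finset A).powerset,
        (-1 : ℤ) ^ S.card *
          ((univ.filter fun f : B → Finset A =>
            (∀ b, (f b).Nonempty) ∧ ∀ b, f b ⊆ Sᶜ).card : ℤ) := by
        refine Finset.sum_congr rfl fun S _ => ?_
        have hpred : ((univ.filter fun f : B → Finset A => ∀ b, (f b).Nonempty).filter
            (fun f => S ⊆ (cov f)ᶜ)) =
            (univ.filter fun f : B → Finset A =>
              (∀ b, (f b).Nonempty) ∧ ∀ b, f b ⊆ Sᶜ) := by
          rw [Finset.filter_filter]
          congr 1
          ext f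
          constructor
          · rintro ⟨h1, h2⟩
            refine ⟨h1, fun b => ?_⟩
            intro a ha
            simp only [Finset.mem_compl]
            intro haS
            have := h2 haS
            simp [hcov] at this
            exact this b ha
          · rintro ⟨h1, h2⟩
            refine ⟨h1, fun a haS => ?_⟩
            simp only [Finset.mem_compl, hcov, Finset.mem_filter, Finset.mem_univ, true_and]
            rintro ⟨b, hb⟩
            have := h2 b hb
            simp at this
            exact this haS
        rw [← Finset.sum_filter, hpred, Finset.sum_const, nsmul_eq_mul, mul_comm]
    _ = ∑ S ∈ (univ : Finset A).powerset,
        (-1 : ℤ) ^ S.card * ((2 : ℤ) ^ (m - S.card) - 1) ^ n := by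
        refine Finset.sum_congr rfl fun S _ => ?_
        congr 1
        have hfilter : (univ.filter fun f : B → Finset A =>
            (∀ b, (f b).Nonempty) ∧ ∀ b, f b ⊆ Sᶜ) =
            Fintype.piFinset (fun _ : B => (Sᶜ).powerset.filter (·.Nonempty)) := by
          ext f
          simp only [Fintype.mem_piFinset, Finset.mem_filter, Finset.mem_univ, true_and,
            Finset.mem_powerset]
          constructor
          · rintro ⟨h1, h2⟩ b
            exact ⟨h2 b, h1 b⟩
          · intro h
            exact ⟨fun b => (h b).2, fun b => (h b).1⟩
        rw [hfilter, Fintype.card_piFinset]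
        have hQ : ((Sᶜ).powerset.filter (·.Nonempty)).card = 2 ^ (m - S.card) - 1 := by
          have : (Sᶜ).powerset.filter (·.Nonempty) = (Sᶜ).powerset.erase ∅ := by
            ext T
            simp [Finset.nonempty_iff_ne_empty, and_comm]
          rw [this, Finset.card_erase_of_mem (by simp), Finset.card_powerset,
            Finset.card_compl, hm]
        rw [Finset.prod_const, hQ]
        push_cast [Nat.one_le_two_pow]
        rw [Finset.card_univ, ← hn]
    _ = ∑ i ∈ Finset.range (m + 1),
        (-1 : ℤ) ^ i * ((m.choose i : ℤ)) * ((2 : ℤ) ^ (m - i) - 1) ^ n := by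
        rw [show m = (univ : Finset A).card from (Finset.card_univ).symm,
          Finset.sum_powerset]
        refine Finset.sum_congr rfl fun i hi => ?_
        rw [← Finset.card_powersetCard, Finset.sum_congr rfl
          (fun S hS => by rw [(Finset.mem_powersetCard.1 hS).2])]
        rw [Finset.sum_const, nsmul_eq_mul]
        ring
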